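/- arXiv:2005.07736 — 2 statements merged into one kernel-verified Lean document; each statement's English description precedes it below -/
import Mathlib

section
/- Let d = 9 and k = 6. The orbit of the row vector δ₄ = (0,0,0,1) ∈ (ℤ/3ℤ)⁴ under right multiplication by the subgroup H₃(9,6) of GL(4, ℤ/3ℤ) generated by the reductions modulo 3 of M₀(9,6) and M₁ is exactly the set {(0,0,a,1) : a ∈ ℤ/3ℤ} = {(0,0,0,1), (0,0,1,1), (0,0,2,1)}. -/
/-- The monodromy matrix `M₀(d,k)` around `0` of the Picard–Fuchs equation of certain
mirror Calabi–Yau threefolds. -/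
def M0 (d k : ℤ) : Matrix (Fin 4) (Fin 4) ℤ :=
  !![1, 1, 0, 0; 0, 1, 0, 0; d, d, 1, 0; 0, -k, -1, 1]

/-- The monodromy matrix `M₁` around `1`. -/
def M1 : Matrix (Fin 4) (Fin 4) ℤ :=
  !![1, 0, 0, 0; 0, 1, 0, 1; 0, 0, 1, 0; 0, 0, 0, 1]

lemma M0_det (d k : ℤ) : (M0 d k).det = 1 := by
  simp [M0, Matrix.det_succ_row_zero, Fin.sum_univ_succ, Fin.succAbove]

lemma M1_det : M1.det = 1 := by
  simp [M1, Matrix.det_succ_row_zero, Fin.sum_univ_succ, Fin.succAbove]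

/-- The reduction modulo `p` of `M₀(d,k)`, as an element of `GL (Fin 4) (ZMod p)`. -/
noncomputable def M0p (p : ℕ) (d k : ℤ) : GL (Fin 4) (ZMod p) :=
  Matrix.nonsingInvUnit ((M0 d k).map (Int.castRingHom (ZMod p)))
    (by rw [← RingHom.mapMatrix_apply, ← RingHom.map_det, M0_det]; simp)

/-- The reduction modulo `p` of `M₁`, as an element of `GL (Fin 4) (ZMod p)`. -/
noncomputable def M1p (p : ℕ) : GL (Fin 4) (ZMod p) :=
  Matrix.nonsingInvUnit (M1.map (Int.castRingHom (ZMod p)))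
    (by rw [← RingHom.mapMatrix_apply, ← RingHom.map_det, M1_det]; simp)

lemma M0p_coe : (M0p 3 9 6 : Matrix (Fin 4) (Fin 4) (ZMod 3)) =
    !![1,1,0,0; 0,1,0,0; 0,0,1,0; 0,0,2,1] := by
  show (M0 9 6).map (Int.castRingHom (ZMod 3)) = _
  ext i j
  fin_cases i <;> fin_cases j <;> simp [M0] <;> decide

lemma M1p_coe : (M1p 3 : Matrix (Fin 4) (Fin 4) (ZMod 3)) =
    !![1,0,0,0; 0,1,0,1; 0,0,1,0; 0,0,0,1] := by
  show M1.map (Int.castRingHom (ZMod 3)) = _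
  ext i j
  fin_cases i <;> fin_cases j <;> simp [M1, Matrix.vecHead, Matrix.vecTail]

set_option maxHeartbeats 1000000 in
theorem orbit3_delta4_96 :
    {w : Fin 4 → ZMod 3 |
      ∃ g ∈ Subgroup.closure {M0p 3 9 6, M1p 3},
        w = Matrix.vecMul ![0,0,0,1] (g : Matrix (Fin 4) (Fin 4) (ZMod 3))} =
    {![0,0,0,1], ![0,0,1,1], ![0,0,2,1]} := by
  have h0 : M0p 3 9 6 ∈ Subgroup.closure {M0p 3 9 6, M1p 3} :=
    Subgroup.subset_closure (by left; rfl)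
  ext w
  simp only [Set.mem_setOf_eq]
  constructor
  · rintro ⟨g, hg, rfl⟩
    have key : ∀ g, g ∈ Subgroup.closure {M0p 3 9 6, M1p 3} →
        ∀ v ∈ ({![0,0,0,1], ![0,0,1,1], ![0,0,2,1]} : Set (Fin 4 → ZMod 3)),
          Matrix.vecMul v (g : Matrix (Fin 4) (Fin 4) (ZMod 3)) ∈
            ({![0,0,0,1], ![0,0,1,1], ![0,0,2,1]} : Set (Fin 4 → ZMod 3)) := by
      intro g hg
      induction hg using Subgroup.closure_induction with
      | mem x hx =>
        rcases hx with rfl | rfl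
        · rw [M0p_coe]
          rintro v (rfl | rfl | rfl) <;>
            simp only [Set.mem_insert_iff, Set.mem_singleton_iff] <;> decide
        · rw [M1p_coe]
          rintro v (rfl | rfl | rfl) <;>
            simp only [Set.mem_insert_iff, Set.mem_singleton_iff] <;> decide
      | one => intro v hv; simpa using hv
      | mul x y hx hy px py =>
        intro v hv
        rw [Units.val_mul, ← Matrix.vecMul_vecMul]
        exact py _ (px _ hv)
      | inv x hx px =>
        intro v hv
        have cancel : ∀ u : Fin 4 → ZMod 3,
            Matrix.vecMul (Matrix.vecMul u (x : Matrix (Fin 4) (Fin 4) (ZMod 3)))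
              ((x⁻¹ : GL (Fin 4) (ZMod 3)) : Matrix (Fin 4) (Fin 4) (ZMod 3)) = u := by
          intro u
          rw [Matrix.vecMul_vecMul, ← Units.val_mul, mul_inv_cancel, Units.val_one,
            Matrix.vecMul_one]
        have hm : Set.MapsTo
            (fun u => Matrix.vecMul u (x : Matrix (Fin 4) (Fin 4) (ZMod 3)))
            ({![0,0,0,1], ![0,0,1,1], ![0,0,2,1]} : Set (Fin 4 → ZMod 3))
            ({![0,0,0,1], ![0,0,1,1], ![0,0,2,1]} : Set (Fin 4 → ZMod 3)) := px
        have hinj : Set.InjOn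
            (fun u => Matrix.vecMul u (x : Matrix (Fin 4) (Fin 4) (ZMod 3)))
            ({![0,0,0,1], ![0,0,1,1], ![0,0,2,1]} : Set (Fin 4 → ZMod 3)) := by
          intro a _ b _ hab
          have := congrArg (fun u => Matrix.vecMul u
            ((x⁻¹ : GL (Fin 4) (ZMod 3)) : Matrix (Fin 4) (Fin 4) (ZMod 3))) hab
          simp only at this
          rwa [cancel a, cancel b] at this
        have hsurj := (((Set.toFinite _).injOn_iff_bijOn_of_mapsTo hm).mp hinj).surjOn
        obtain ⟨u, hu, hux⟩ := hsurj hv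
        have hux' : Matrix.vecMul u (x : Matrix (Fin 4) (Fin 4) (ZMod 3)) = v := hux
        rw [← hux', cancel]
        exact hu
    exact key g hg _ (by left; rfl)
  · rintro (rfl | rfl | rfl)
    · exact ⟨1, one_mem _, by simp⟩
    · refine ⟨M0p 3 9 6 * M0p 3 9 6, mul_mem h0 h0, ?_⟩
      rw [Units.val_mul, M0p_coe, ← Matrix.vecMul_vecMul]
      decide
    · exact ⟨M0p 3 9 6, h0, by rw [M0p_coe]; decide⟩
end

section
/- Let d = 6 and k = 5. The orbit of the row vector δ₄ = (0,0,0,1) ∈ (ℤ/3ℤ)⁴ under right multiplication by the subgroup H₃(6,5) of GL(4, ℤ/3ℤ) generated by the reductions modulo 3 of M₀(6,5) and M₁ is exactly the set {(0,0,0,1), (0,0,0,2), (0,1,2,0), (0,1,2,1), (0,1,2,2), (0,2,1,0), (0,2,1,1), (0,2,1,2)}. -/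
/- auxiliary material -/

def Amat : Matrix (Fin 4) (Fin 4) (ZMod 3) := !![1,1,0,0; 0,1,0,0; 0,0,1,0; 0,1,2,1]
def Ainv : Matrix (Fin 4) (Fin 4) (ZMod 3) := !![1,2,0,0; 0,1,0,0; 0,0,1,0; 0,2,1,1]
def Bmat : Matrix (Fin 4) (Fin 4) (ZMod 3) := !![1,0,0,0; 0,1,0,1; 0,0,1,0; 0,0,0,1]
def Binv : Matrix (Fin 4) (Fin 4) (ZMod 3) := !![1,0,0,0; 0,1,0,2; 0,0,1,0; 0,0,0,1]

def SL : List (Fin 4 → ZMod 3) :=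
  [![0,0,0,1], ![0,0,0,2], ![0,1,2,0], ![0,1,2,1], ![0,1,2,2],
   ![0,2,1,0], ![0,2,1,1], ![0,2,1,2]]

lemma coeA : ((M0p 3 6 5 : GL (Fin 4) (ZMod 3)) : Matrix (Fin 4) (Fin 4) (ZMod 3)) = Amat := by
  show (M0 6 5).map (Int.castRingHom (ZMod 3)) = Amat
  ext i j
  fin_cases i <;> fin_cases j <;> simp [M0, Amat] <;> decide

lemma coeB : ((M1p 3 : GL (Fin 4) (ZMod 3)) : Matrix (Fin 4) (Fin 4) (ZMod 3)) = Bmat := by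
  show M1.map (Int.castRingHom (ZMod 3)) = Bmat
  ext i j
  fin_cases i <;> fin_cases j <;> simp [M1, Bmat] <;> decide

lemma coeAinv :
    (((M0p 3 6 5)⁻¹ : GL (Fin 4) (ZMod 3)) : Matrix (Fin 4) (Fin 4) (ZMod 3)) = Ainv := by
  have h1 : (((M0p 3 6 5)⁻¹ : GL (Fin 4) (ZMod 3)) : Matrix (Fin 4) (Fin 4) (ZMod 3)) *
      ((M0p 3 6 5 : GL (Fin 4) (ZMod 3)) : Matrix (Fin 4) (Fin 4) (ZMod 3)) = 1 := by
    rw [← Units.val_mul, inv_mul_cancel, Units.val_one]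
  have h2 : ((M0p 3 6 5 : GL (Fin 4) (ZMod 3)) : Matrix (Fin 4) (Fin 4) (ZMod 3)) * Ainv = 1 := by
    rw [coeA]; decide
  exact left_inv_eq_right_inv h1 h2

lemma coeBinv :
    (((M1p 3)⁻¹ : GL (Fin 4) (ZMod 3)) : Matrix (Fin 4) (Fin 4) (ZMod 3)) = Binv := by
  have h1 : (((M1p 3)⁻¹ : GL (Fin 4) (ZMod 3)) : Matrix (Fin 4) (Fin 4) (ZMod 3)) *
      ((M1p 3 : GL (Fin 4) (ZMod 3)) : Matrix (Fin 4) (Fin 4) (ZMod 3)) = 1 := by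
    rw [← Units.val_mul, inv_mul_cancel, Units.val_one]
  have h2 : ((M1p 3 : GL (Fin 4) (ZMod 3)) : Matrix (Fin 4) (Fin 4) (ZMod 3)) * Binv = 1 := by
    rw [coeB]; decide
  exact left_inv_eq_right_inv h1 h2

lemma stab : ∀ w ∈ SL, Matrix.vecMul w Amat ∈ SL ∧ Matrix.vecMul w Ainv ∈ SL ∧
    Matrix.vecMul w Bmat ∈ SL ∧ Matrix.vecMul w Binv ∈ SL := by decide

theorem orbit3_delta4_65 :
    {w : Fin 4 → ZMod 3 |
      ∃ g ∈ Subgroup.closure {M0p 3 6 5, M1p 3},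
        w = Matrix.vecMul ![0,0,0,1] (g : Matrix (Fin 4) (Fin 4) (ZMod 3))} =
    {![0,0,0,1], ![0,0,0,2], ![0,1,2,0], ![0,1,2,1], ![0,1,2,2], ![0,2,1,0], ![0,2,1,1], ![0,2,1,2]} := by
  have hA : M0p 3 6 5 ∈ Subgroup.closure {M0p 3 6 5, M1p 3} :=
    Subgroup.subset_closure (by simp)
  have hB : M1p 3 ∈ Subgroup.closure {M0p 3 6 5, M1p 3} :=
    Subgroup.subset_closure (by simp)
  have memiff : ∀ w : Fin 4 → ZMod 3, w ∈ SL ↔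
      w ∈ ({![0,0,0,1], ![0,0,0,2], ![0,1,2,0], ![0,1,2,1], ![0,1,2,2], ![0,2,1,0], ![0,2,1,1],
        ![0,2,1,2]} : Set (Fin 4 → ZMod 3)) := by
    intro w
    simp only [SL, List.mem_cons, List.not_mem_nil, or_false, Set.mem_insert_iff,
      Set.mem_singleton_iff]
  ext w
  simp only [Set.mem_setOf_eq]
  constructor
  · rintro ⟨g, hg, rfl⟩
    rw [← memiff]
    have main : ∀ g' ∈ Subgroup.closure {M0p 3 6 5, M1p 3}, ∀ w ∈ SL,
        Matrix.vecMul w ((g' : GL (Fin 4) (ZMod 3)) : Matrix (Fin 4) (Fin 4) (ZMod 3)) ∈ SL ∧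
        Matrix.vecMul w (((g'⁻¹ : GL (Fin 4) (ZMod 3))) : Matrix (Fin 4) (Fin 4) (ZMod 3)) ∈ SL := by
      intro g' hg'
      induction hg' using Subgroup.closure_induction with
      | mem x hx =>
        simp only [Set.mem_insert_iff, Set.mem_singleton_iff] at hx
        rcases hx with rfl | rfl
        · intro w hw
          rw [coeA, coeAinv]
          exact ⟨(stab w hw).1, (stab w hw).2.1⟩
        · intro w hw
          rw [coeB, coeBinv]
          exact ⟨(stab w hw).2.2.1, (stab w hw).2.2.2⟩
      | one =>
        intro w hw
        simp only [inv_one, Units.val_one, Matrix.vecMul_one]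
        exact ⟨hw, hw⟩
      | mul x y hx hy ihx ihy =>
        intro w hw
        constructor
        · rw [Units.val_mul, ← Matrix.vecMul_vecMul]
          exact (ihy _ (ihx w hw).1).1
        · rw [mul_inv_rev, Units.val_mul, ← Matrix.vecMul_vecMul]
          exact (ihx _ (ihy w hw).2).2
      | inv x hx ihx =>
        intro w hw
        refine ⟨(ihx w hw).2, ?_⟩
        rw [inv_inv]
        exact (ihx w hw).1
    exact (main g hg ![0,0,0,1] (by decide)).1
  · intro hw
    simp only [Set.mem_insert_iff, Set.mem_singleton_iff] at hw
    rcases hw with rfl | rfl | rfl | rfl | rfl | rfl | rfl | rfl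
    · exact ⟨1, one_mem _, by rw [Units.val_one, Matrix.vecMul_one]⟩
    · exact ⟨M0p 3 6 5 * M1p 3 * M0p 3 6 5, mul_mem (mul_mem hA hB) hA, by
        rw [Units.val_mul, Units.val_mul, coeA, coeB]; decide⟩
    · exact ⟨M0p 3 6 5 * M1p 3 * M1p 3, mul_mem (mul_mem hA hB) hB, by
        rw [Units.val_mul, Units.val_mul, coeA, coeB]; decide⟩
    · exact ⟨M0p 3 6 5, hA, by rw [coeA]; decide⟩
    · exact ⟨M0p 3 6 5 * M1p 3, mul_mem hA hB, by
        rw [Units.val_mul, coeA, coeB]; decide⟩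
    · exact ⟨M0p 3 6 5 * M0p 3 6 5 * M1p 3, mul_mem (mul_mem hA hA) hB, by
        rw [Units.val_mul, Units.val_mul, coeA, coeB]; decide⟩
    · exact ⟨M0p 3 6 5 * M0p 3 6 5, mul_mem hA hA, by
        rw [Units.val_mul, coeA]; decide⟩
    · exact ⟨M0p 3 6 5 * M0p 3 6 5 * M1p 3 * M1p 3, mul_mem (mul_mem (mul_mem hA hA) hB) hB, by
        rw [Units.val_mul, Units.val_mul, Units.val_mul, coeA, coeB]; decide⟩
end
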